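/- For every k ≥ 2 and every permutation ρ of {1,…,k}: for every i ≠ ρ(k) one has Φ_ρ(i) ≠ ρ(1), so that f_{ρ(1)}(Φ_ρ(i)) is defined; and the map g : {1,…,k} → {1,…,k} given by g(ρ(k)) = 1 and g(i) = f_{ρ(1)}(Φ_ρ(i)) + 1 for i ≠ ρ(k) is a bijection. Hence there is a unique permutation π_conc(ρ) of {1,…,k} with π_conc(ρ)(1) = ρ(k) and π_conc(ρ)^{-1}(i) = f_{ρ(1)}(Φ_ρ(i)) + 1 for all i ≠ ρ(k). -/
import Mathlib


/-- The linking permutation `Φ_ρ` of a permutation `ρ` of `{0,…,k−1}` (0-indexed):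
`Φ_ρ(i) = ρ(ρ⁻¹(i)+1)` for `i ≠ ρ(k−1)` and `Φ_ρ(ρ(k−1)) = ρ(0)`; both cases are
captured by `ρ (ρ⁻¹ i + 1)` with addition modulo `k`. -/
def linkPerm {k : ℕ} (ρ : Equiv.Perm (Fin (k + 2))) (i : Fin (k + 2)) : Fin (k + 2) :=
  ρ (ρ.symm i + 1)

/-- `f_j(i)`, for `i ≠ j`: the rank of `i` in `{0,…,k−1} \ {j}` (0-indexed). -/
def rankAvoid {k : ℕ} (j i : Fin (k + 2)) : ℕ := if i < j then i else i - 1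

/-- For every `k ≥ 2` and permutation `ρ` of `{1,…,k}` (modelled
0-indexed on `Fin (k+2)`): for every `i ≠ ρ(k)` one has `Φ_ρ(i) ≠ ρ(1)`, so
`f_{ρ(1)}(Φ_ρ(i))` is defined; the map `g` sending `ρ(k)` to the first position and
`i ≠ ρ(k)` to `f_{ρ(1)}(Φ_ρ(i)) + 1` is a bijection of `{1,…,k}`; hence there is a
unique permutation `π_conc(ρ)` with `π_conc(ρ)(1) = ρ(k)` and
`π_conc(ρ)⁻¹(i) = f_{ρ(1)}(Φ_ρ(i)) + 1` for all `i ≠ ρ(k)`. -/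
theorem piConc_exists_unique (k : ℕ) (ρ : Equiv.Perm (Fin (k + 2)))
    (g : Fin (k + 2) → ℕ)
    (hg : ∀ i, g i = if i = ρ (Fin.last (k + 1)) then 0
      else rankAvoid (ρ 0) (linkPerm ρ i) + 1) :
    (∀ i, i ≠ ρ (Fin.last (k + 1)) → linkPerm ρ i ≠ ρ 0) ∧
    (Function.Injective g ∧ ∀ m < k + 2, ∃ i, g i = m) ∧
    (∃! π : Equiv.Perm (Fin (k + 2)),
      π 0 = ρ (Fin.last (k + 1)) ∧
      ∀ i, i ≠ ρ (Fin.last (k + 1)) →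
        (π.symm i : ℕ) = rankAvoid (ρ 0) (linkPerm ρ i) + 1) := by
  -- Part 1: Φ_ρ(i) ≠ ρ(0) for i ≠ ρ(last)
  have hval : ∀ i : Fin (k + 2), i ≠ ρ (Fin.last (k + 1)) → linkPerm ρ i ≠ ρ 0 := by
    intro i hi h
    apply hi
    have h1 : ρ.symm i + 1 = 0 := ρ.injective h
    have h2 : ρ.symm i = Fin.last (k + 1) := by
      by_contra hne
      have hv := Fin.val_add_one (ρ.symm i)
      rw [if_neg hne, h1] at hv
      simp at hv
    rw [← h2]; simp
  -- injectivity of linkPerm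
  have hΦinj : Function.Injective (linkPerm ρ) := by
    intro a b h
    have h1 : ρ.symm a + 1 = ρ.symm b + 1 := ρ.injective h
    have h2 : ρ.symm a = ρ.symm b := by
      have := add_right_cancel h1
      exact this
    exact ρ.symm.injective h2
  -- injectivity of rankAvoid away from ρ 0
  have hrank : ∀ x y : Fin (k + 2), x ≠ ρ 0 → y ≠ ρ 0 →
      rankAvoid (ρ 0) x = rankAvoid (ρ 0) y → x = y := by
    intro x y hx hy h
    have hx' : (x : ℕ) ≠ (ρ 0 : ℕ) := fun hh => hx (Fin.ext hh)
    have hy' : (y : ℕ) ≠ (ρ 0 : ℕ) := fun hh => hy (Fin.ext hh)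
    unfold rankAvoid at h
    apply Fin.ext
    split_ifs at h with h1 h2 h2 <;>
      simp only [Fin.lt_def, not_lt] at h1 h2 <;> omega
  -- bound on g
  have hlt : ∀ i, g i < k + 2 := by
    intro i
    rw [hg]
    split_ifs with h
    · omega
    · have h2 := hval i h
      have hne : (linkPerm ρ i : ℕ) ≠ (ρ 0 : ℕ) := fun hh => h2 (Fin.ext hh)
      have hb1 := (linkPerm ρ i).isLt
      have hb2 := (ρ 0).isLt
      unfold rankAvoid
      split_ifs with h3
      · simp only [Fin.lt_def] at h3; omega
      · simp only [Fin.lt_def, not_lt] at h3; omega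
  -- injectivity of g
  have hginj : Function.Injective g := by
    intro a b h
    rw [hg, hg] at h
    by_cases h1 : a = ρ (Fin.last (k + 1)) <;> by_cases h2 : b = ρ (Fin.last (k + 1))
    · rw [h1, h2]
    · rw [if_pos h1, if_neg h2] at h; omega
    · rw [if_neg h1, if_pos h2] at h; omega
    · rw [if_neg h1, if_neg h2] at h
      have h3 : rankAvoid (ρ 0) (linkPerm ρ a) = rankAvoid (ρ 0) (linkPerm ρ b) := by omega
      exact hΦinj (hrank _ _ (hval a h1) (hval b h2) h3)
  -- construct π
  let G : Fin (k + 2) → Fin (k + 2) := fun i => ⟨g i, hlt i⟩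
  have hGinj : Function.Injective G := by
    intro a b h
    exact hginj (congrArg Fin.val h)
  have hGbij : Function.Bijective G := Finite.injective_iff_bijective.mp hGinj
  let π : Equiv.Perm (Fin (k + 2)) := (Equiv.ofBijective G hGbij).symm
  have hπsymm : ∀ i, (π.symm i : ℕ) = g i := by
    intro i
    simp only [π, Equiv.symm_symm, Equiv.ofBijective_apply, G]
  have hπ2 : ∀ i, i ≠ ρ (Fin.last (k + 1)) →
      (π.symm i : ℕ) = rankAvoid (ρ 0) (linkPerm ρ i) + 1 := by
    intro i hi
    rw [hπsymm, hg, if_neg hi]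
  have hπsL : π.symm (ρ (Fin.last (k + 1))) = 0 := by
    apply Fin.ext
    rw [hπsymm, hg, if_pos rfl]
    simp
  have hπ0 : π 0 = ρ (Fin.last (k + 1)) := by
    rw [← hπsL]; simp
  refine ⟨hval, ⟨hginj, ?_⟩, π, ⟨hπ0, hπ2⟩, ?_⟩
  · intro m hm
    obtain ⟨i, hi⟩ := hGbij.2 ⟨m, hm⟩
    exact ⟨i, congrArg Fin.val hi⟩
  · rintro π' ⟨h1, h2⟩
    have hs : ∀ i, π'.symm i = π.symm i := by
      intro i
      by_cases hi : i = ρ (Fin.last (k + 1))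
      · subst hi
        rw [hπsL, Equiv.symm_apply_eq, ← h1]
      · exact Fin.ext ((h2 i hi).trans (hπ2 i hi).symm)
    have hsymm : π'.symm = π.symm := Equiv.ext hs
    calc π' = π'.symm.symm := (Equiv.symm_symm π').symm
      _ = π.symm.symm := by rw [hsymm]
      _ = π := Equiv.symm_symm π
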